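/- Let J ⊆ (ℝ,≤)² be a connected and convex subposet and M:J→vect_F a functor such that M(i≤j) is an isomorphism for all i≤j in J. Then for any a≤b in J and any zigzag path p: a−x₁−⋯−xₙ−b in J, the composite M(a⇝b along p) equals M(a≤b). -/

import Mathlib

/-- A persistence module over a preorder `P` with coefficients in a field `F`:
a functor `(P,≤) → Vect_F`, given by vector spaces `V p` and linear maps
`map : i ≤ j → (V i →ₗ[F] V j)` satisfying the functoriality equations. -/
structure PersistenceModule (F : Type) [Field F] (P : Type) [Preorder P] where
  V : P → Type
  [addCommGroup : ∀ p, AddCommGroup (V p)]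
  [module : ∀ p, Module F (V p)]
  map : ∀ {i j : P}, i ≤ j → (V i →ₗ[F] V j)
  map_id : ∀ i : P, map (le_refl i) = LinearMap.id
  map_comp : ∀ {i j k : P} (hij : i ≤ j) (hjk : j ≤ k),
    (map hjk).comp (map hij) = map (hij.trans hjk)

attribute [instance] PersistenceModule.addCommGroup PersistenceModule.module

/-- A zigzag path `a - x₁ - ⋯ - xₙ - b` in a preorder, where each consecutive
pair of points is comparable. -/
inductive Zigzag (P : Type) [Preorder P] : P → P → Type
  | single (a : P) : Zigzag P a a
  | consLe {a b c : P} (h : a ≤ b) (p : Zigzag P b c) : Zigzag P a c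
  | consGe {a b c : P} (h : b ≤ a) (p : Zigzag P b c) : Zigzag P a c

/-- Convexity of a subset of a poset: `i ≤ j ≤ k` with `i, k ∈ J` implies `j ∈ J`. -/
def PosetConvex {P : Type} [Preorder P] (J : Set P) : Prop :=
  ∀ i ∈ J, ∀ k ∈ J, ∀ j : P, i ≤ j → j ≤ k → j ∈ J

/-- Connectedness: any two points of `J` are joined by a finite zigzag path inside `J`. -/
def ZigzagConnected {P : Type} [Preorder P] (J : Set P) : Prop :=
  ∀ a b : J, Nonempty (Zigzag (↥J) a b)

/-- The composite `M(a ⇝ b)` along a zigzag path, using `M̂(i,j) = M(i≤j)` on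
good arrows and `M̂(i,j) = M(j≤i)⁻¹` on bad arrows. -/
noncomputable def zigzagMap {F : Type} [Field F] {P : Type} [Preorder P]
    (M : PersistenceModule F P)
    (hiso : ∀ (i j : P) (h : i ≤ j), Function.Bijective (M.map h)) :
    {a b : P} → Zigzag P a b → (M.V a →ₗ[F] M.V b)
  | _, _, .single _ => LinearMap.id
  | _, _, .consLe h p => (zigzagMap M hiso p).comp (M.map h)
  | _, _, .consGe h p =>
      (zigzagMap M hiso p).comp
        ((LinearEquiv.ofBijective (M.map h) (hiso _ _ h)).symm.toLinearMap)

namespace ZZHelp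

/-- length of a zigzag -/
def zlen {P : Type} [Preorder P] : {a b : P} → Zigzag P a b → ℕ
  | _, _, .single _ => 0
  | _, _, .consLe _ p => zlen p + 1
  | _, _, .consGe _ p => zlen p + 1

@[simp] lemma zlen_single {P : Type} [Preorder P] (a : P) :
    zlen (Zigzag.single a (P := P)) = 0 := rfl
@[simp] lemma zlen_consLe {P : Type} [Preorder P] {a x b : P} (h : a ≤ x) (p : Zigzag P x b) :
    zlen (Zigzag.consLe h p) = zlen p + 1 := rfl
@[simp] lemma zlen_consGe {P : Type} [Preorder P] {a x b : P} (h : x ≤ a) (p : Zigzag P x b) :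
    zlen (Zigzag.consGe h p) = zlen p + 1 := rfl

variable {F : Type} [Field F] {P : Type} [Preorder P]
  (M : PersistenceModule F P)
  (hiso : ∀ (i j : P) (h : i ≤ j), Function.Bijective (M.map h))

noncomputable def Minv {i j : P} (h : i ≤ j) : M.V j →ₗ[F] M.V i :=
  (LinearEquiv.ofBijective (M.map h) (hiso i j h)).symm.toLinearMap

@[simp] lemma zig_single (a : P) :
    zigzagMap M hiso (.single a) = LinearMap.id := rfl
@[simp] lemma zig_consLe {a x b : P} (h : a ≤ x) (p : Zigzag P x b) :
    zigzagMap M hiso (.consLe h p) = (zigzagMap M hiso p).comp (M.map h) := rfl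
@[simp] lemma zig_consGe {a x b : P} (h : x ≤ a) (p : Zigzag P x b) :
    zigzagMap M hiso (.consGe h p) = (zigzagMap M hiso p).comp (Minv M hiso h) := rfl

lemma hp_K {i j k : P} (h1 : i ≤ j) (h2 : j ≤ k) (z : M.V i) :
    M.map h2 (M.map h1 z) = M.map (h1.trans h2) z := by
  simpa using (LinearMap.congr_fun (M.map_comp h1 h2) z)

lemma hp_inv_map {i j : P} (h : i ≤ j) (z : M.V i) :
    Minv M hiso h (M.map h z) = z := by
  show (LinearEquiv.ofBijective (M.map h) (hiso i j h)).symm (M.map h z) = z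
  rw [LinearEquiv.symm_apply_eq, LinearEquiv.ofBijective_apply]

lemma hp_map_inv {i j : P} (h : i ≤ j) (z : M.V j) :
    M.map h (Minv M hiso h z) = z := by
  have := LinearEquiv.apply_symm_apply (LinearEquiv.ofBijective (M.map h) (hiso i j h)) z
  simpa [LinearEquiv.ofBijective_apply, Minv] using this

lemma hp_invK {i j k : P} (h1 : i ≤ j) (h2 : j ≤ k) (z : M.V k) :
    Minv M hiso h1 (Minv M hiso h2 z) = Minv M hiso (h1.trans h2) z := by
  show (LinearEquiv.ofBijective (M.map h1) (hiso i j h1)).symm (Minv M hiso h2 z) = _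
  rw [LinearEquiv.symm_apply_eq, LinearEquiv.ofBijective_apply]
  show Minv M hiso h2 z = M.map h1 (Minv M hiso (h1.trans h2) z)
  have : M.map h2 (M.map h1 (Minv M hiso (h1.trans h2) z)) = z := by
    rw [hp_K, hp_map_inv]
  calc Minv M hiso h2 z = Minv M hiso h2 (M.map h2 (M.map h1 (Minv M hiso (h1.trans h2) z))) := by
        rw [this]
    _ = M.map h1 (Minv M hiso (h1.trans h2) z) := hp_inv_map ..

lemma hp_SC1 {x a y : P} (hxa : x ≤ a) (hay : a ≤ y) (z : M.V a) :
    M.map (hxa.trans hay) (Minv M hiso hxa z) = M.map hay z := by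
  rw [← hp_K M hxa hay, hp_map_inv]

lemma hp_SC2 {x y a : P} (hxy : x ≤ y) (hya : y ≤ a) (z : M.V a) :
    M.map hxy (Minv M hiso (hxy.trans hya) z) = Minv M hiso hya z := by
  rw [← hp_invK M hiso hxy hya, hp_map_inv]

lemma hp_SC3 {i j k : P} (h1 : i ≤ j) (h2 : j ≤ k) (z : M.V i) :
    Minv M hiso h2 (M.map (h1.trans h2) z) = M.map h1 z := by
  rw [← hp_K M h1 h2, hp_inv_map]

lemma hp_SC4 {i j k : P} (h1 : i ≤ j) (h2 : j ≤ k) (z : M.V j) :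
    Minv M hiso (h1.trans h2) (M.map h2 z) = Minv M hiso h1 z := by
  rw [← hp_invK M hiso h1 h2, hp_inv_map]

lemma hp_VAL {x m a y : P} (hxm : x ≤ m) (hma : m ≤ a) (hmy : m ≤ y) (z : M.V a) :
    M.map (hxm.trans hmy) (Minv M hiso (hxm.trans hma) z) = M.map hmy (Minv M hiso hma z) := by
  rw [← hp_invK M hiso hxm hma, ← hp_K M hxm hmy, hp_map_inv]

end ZZHelp

section RealPart
open ZZHelp

variable {F : Type} [Field F] {J : Set (ℝ × ℝ)}
  (M : PersistenceModule F ↥J)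
  (hiso : ∀ (i j : ↥J) (h : i ≤ j), Function.Bijective (M.map h))

/-- Staircase walk: given an irreducible-so-far frontier `P ≥ m ≤ Q` with the
coordinate invariants `π m = π Q < t ≤ π b`, the remaining path
`P ≥ m ≤ Q ⟨q⟩` admits a strictly shorter path with the same zigzag map. -/
theorem zz_core (hconv : PosetConvex J)
    (π π' : ℝ × ℝ → ℝ)
    (hle : ∀ u v : ℝ × ℝ, u ≤ v ↔ π u ≤ π v ∧ π' u ≤ π' v)
    (hinf : ∀ u v : ℝ × ℝ, π (u ⊓ v) = min (π u) (π v))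
    {b : ↥J} (t : ℝ) (htb : t ≤ π (b : ℝ × ℝ)) :
    ∀ (n : ℕ) (Q : ↥J) (q : Zigzag (↥J) Q b), zlen q ≤ n →
    ∀ (P m : ↥J) (hmP : m ≤ P) (hmQ : m ≤ Q),
      π (Q : ℝ × ℝ) < t → π (m : ℝ × ℝ) = π (Q : ℝ × ℝ) →
    ∃ s : Zigzag (↥J) P b, zlen s < 2 + zlen q ∧
      zigzagMap M hiso s = zigzagMap M hiso (.consGe hmP (.consLe hmQ q)) := by
  intro n
  induction n with
  | zero =>
    intro Q q hq
    cases q with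
    | single =>
      intro P m hmP hmQ hQt hmπ
      exact absurd htb (not_le.mpr hQt)
    | consLe h q' => simp [zlen] at hq
    | consGe h q' => simp [zlen] at hq
  | succ n ih =>
    intro Q q hq P m hmP hmQ hQt hmπ
    cases q with
    | single =>
      exact absurd htb (not_le.mpr hQt)
    | consLe hQR q' =>
      refine ⟨.consGe hmP (.consLe (hmQ.trans hQR) q'), by simp only [zlen_single, zlen_consLe, zlen_consGe]; omega, ?_⟩
      refine LinearMap.ext fun x => ?_
      simp only [zig_consGe, zig_consLe, LinearMap.comp_apply]
      rw [hp_K]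
    | consGe hwQ q' =>
      cases q' with
      | single =>
        have h1 : π (b : ℝ × ℝ) ≤ π (Q : ℝ × ℝ) :=
          ((hle _ _).1 (Subtype.coe_le_coe.mpr hwQ)).1
        exact absurd htb (not_le.mpr (lt_of_le_of_lt h1 hQt))
      | consGe hvw q'' =>
        refine ⟨.consGe hmP (.consLe hmQ (.consGe (hvw.trans hwQ) q'')), by simp only [zlen_single, zlen_consLe, zlen_consGe]; omega, ?_⟩
        refine LinearMap.ext fun x => ?_
        simp only [zig_consGe, zig_consLe, LinearMap.comp_apply]
        rw [hp_invK]
      | consLe hwR q'' =>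
        rename_i w R
        by_cases hQR : Q ≤ R
        · refine ⟨.consGe hmP (.consLe (hmQ.trans hQR) q''), by simp only [zlen_single, zlen_consLe, zlen_consGe]; omega, ?_⟩
          refine LinearMap.ext fun x => ?_
          simp only [zig_consGe, zig_consLe, LinearMap.comp_apply]
          rw [show M.map hwR = M.map (hwQ.trans hQR) from rfl, hp_SC1 M hiso hwQ hQR, hp_K]
        · by_cases hRQ : R ≤ Q
          · refine ⟨.consGe hmP (.consLe hmQ (.consGe hRQ q'')), by simp only [zlen_single, zlen_consLe, zlen_consGe]; omega, ?_⟩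
            refine LinearMap.ext fun x => ?_
            simp only [zig_consGe, zig_consLe, LinearMap.comp_apply]
            rw [show (Minv M hiso hwQ : M.V Q →ₗ[F] M.V w) = Minv M hiso (hwR.trans hRQ) from rfl,
              hp_SC2 M hiso hwR hRQ]
          · -- Q and R incomparable; tighten the valley w to m'' = Q ⊓ R
            have hcQ : (w : ℝ × ℝ) ≤ (Q : ℝ × ℝ) := Subtype.coe_le_coe.mpr hwQ
            have hcR : (w : ℝ × ℝ) ≤ (R : ℝ × ℝ) := Subtype.coe_le_coe.mpr hwR
            have hmem : ((Q : ℝ × ℝ) ⊓ (R : ℝ × ℝ)) ∈ J :=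
              hconv (w : ℝ × ℝ) w.2 (Q : ℝ × ℝ) Q.2 _ (le_inf hcQ hcR) inf_le_left
            set m'' : ↥J := ⟨(Q : ℝ × ℝ) ⊓ (R : ℝ × ℝ), hmem⟩ with hm''
            have hwm'' : w ≤ m'' := Subtype.coe_le_coe.mp (le_inf hcQ hcR)
            have hm''Q : m'' ≤ Q := Subtype.coe_le_coe.mp inf_le_left
            have hm''R : m'' ≤ R := Subtype.coe_le_coe.mp inf_le_right
            have hne : π (Q : ℝ × ℝ) ≠ π (R : ℝ × ℝ) := by
              intro he
              rcases le_total (π' (Q : ℝ × ℝ)) (π' (R : ℝ × ℝ)) with h | h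
              · exact hQR (Subtype.coe_le_coe.mp ((hle _ _).2 ⟨le_of_eq he, h⟩))
              · exact hRQ (Subtype.coe_le_coe.mp ((hle _ _).2 ⟨le_of_eq he.symm, h⟩))
            rcases lt_or_gt_of_ne hne with hQltR | hRltQ
            · -- π Q < π R : then π m'' = π Q = π m, so m and m'' are comparable
              have hm''π : π (m'' : ℝ × ℝ) = π (Q : ℝ × ℝ) := by
                show π ((Q : ℝ × ℝ) ⊓ (R : ℝ × ℝ)) = _
                rw [hinf]; exact min_eq_left hQltR.le
              rcases le_total (π' (m : ℝ × ℝ)) (π' (m'' : ℝ × ℝ)) with h | h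
              · have hcmp : m ≤ m'' :=
                  Subtype.coe_le_coe.mp ((hle _ _).2 ⟨by rw [hmπ, hm''π], h⟩)
                refine ⟨.consGe hmP (.consLe (hcmp.trans hm''R) q''), by simp only [zlen_single, zlen_consLe, zlen_consGe]; omega, ?_⟩
                refine LinearMap.ext fun x => ?_
                simp only [zig_consGe, zig_consLe, LinearMap.comp_apply]
                rw [show M.map hwR = M.map (hwm''.trans hm''R) from rfl,
                  show (Minv M hiso hwQ : M.V Q →ₗ[F] M.V w) = Minv M hiso (hwm''.trans hm''Q) from rfl,
                  hp_VAL M hiso hwm'' hm''Q hm''R,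
                  show M.map hmQ = M.map (hcmp.trans hm''Q) from rfl,
                  hp_SC3 M hiso hcmp hm''Q, hp_K]
              · have hcmp : m'' ≤ m :=
                  Subtype.coe_le_coe.mp ((hle _ _).2 ⟨by rw [hmπ, hm''π], h⟩)
                refine ⟨.consGe (hcmp.trans hmP) (.consLe hm''R q''), by simp only [zlen_single, zlen_consLe, zlen_consGe]; omega, ?_⟩
                refine LinearMap.ext fun x => ?_
                simp only [zig_consGe, zig_consLe, LinearMap.comp_apply]
                rw [show M.map hwR = M.map (hwm''.trans hm''R) from rfl,
                  show (Minv M hiso hwQ : M.V Q →ₗ[F] M.V w) = Minv M hiso (hwm''.trans hm''Q) from rfl,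
                  hp_VAL M hiso hwm'' hm''Q hm''R,
                  show (Minv M hiso hm''Q : M.V Q →ₗ[F] M.V m'') = Minv M hiso (hcmp.trans hmQ) from rfl,
                  hp_SC4 M hiso hcmp hmQ, hp_invK]
            · -- π R < π Q : recurse with the new frontier Q ≥ m'' ≤ R
              have hm''π : π (m'' : ℝ × ℝ) = π (R : ℝ × ℝ) := by
                show π ((Q : ℝ × ℝ) ⊓ (R : ℝ × ℝ)) = _
                rw [hinf]; exact min_eq_right hRltQ.le
              have hRt : π (R : ℝ × ℝ) < t := lt_trans hRltQ hQt
              have hq'' : zlen q'' ≤ n := by simp [zlen] at hq; omega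
              obtain ⟨s', hs'len, hs'zig⟩ := ih R q'' hq'' Q m'' hm''Q hm''R hRt hm''π
              refine ⟨.consGe hmP (.consLe hmQ s'), by simp only [zlen_single, zlen_consLe, zlen_consGe]; omega, ?_⟩
              refine LinearMap.ext fun x => ?_
              simp only [zig_consGe, zig_consLe, LinearMap.comp_apply]
              rw [show M.map hwR = M.map (hwm''.trans hm''R) from rfl,
                show (Minv M hiso hwQ : M.V Q →ₗ[F] M.V w) = Minv M hiso (hwm''.trans hm''Q) from rfl,
                hp_VAL M hiso hwm'' hm''Q hm''R]
              have := LinearMap.congr_fun hs'zig (M.map hmQ (Minv M hiso hmP x))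
              simp only [zig_consGe, zig_consLe, LinearMap.comp_apply] at this
              exact this

/-- Coordinate package A : first coordinate. -/
lemma zz_hleA : ∀ u v : ℝ × ℝ, u ≤ v ↔ u.1 ≤ v.1 ∧ u.2 ≤ v.2 := fun _ _ => Prod.le_def
lemma zz_hinfA : ∀ u v : ℝ × ℝ, (u ⊓ v).1 = min u.1 v.1 := fun _ _ => by
  simp [Prod.inf_def]
/-- Coordinate package B : second coordinate. -/
lemma zz_hleB : ∀ u v : ℝ × ℝ, u ≤ v ↔ u.2 ≤ v.2 ∧ u.1 ≤ v.1 := fun u v => by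
  rw [Prod.le_def]; exact and_comm
lemma zz_hinfB : ∀ u v : ℝ × ℝ, (u ⊓ v).2 = min u.2 v.2 := fun _ _ => by
  simp [Prod.inf_def]

/-- Every zigzag of length at least 2 between comparable endpoints can be
replaced by a strictly shorter one with the same composite. -/
theorem zz_reduce (hconv : PosetConvex J) {a b : ↥J} (hab : a ≤ b)
    (p : Zigzag (↥J) a b) (h2 : 2 ≤ zlen p) :
    ∃ r : Zigzag (↥J) a b, zlen r < zlen p ∧
      zigzagMap M hiso r = zigzagMap M hiso p := by
  cases p with
  | single => simp [zlen] at h2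
  | consLe haP q =>
    rename_i P
    cases q with
    | single => simp [zlen] at h2
    | consLe hPX q' =>
      refine ⟨.consLe (haP.trans hPX) q', by simp only [zlen_single, zlen_consLe, zlen_consGe]; omega, ?_⟩
      refine LinearMap.ext fun x => ?_
      simp only [zig_consGe, zig_consLe, LinearMap.comp_apply]
      rw [hp_K]
    | consGe hwP q' =>
      rename_i w
      cases q' with
      | single =>
        -- pattern a ≤ P ≥ b with a ≤ b
        refine ⟨.consLe hab (.single b), by simp only [zlen_single, zlen_consLe, zlen_consGe]; omega, ?_⟩
        refine LinearMap.ext fun x => ?_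
        simp only [zig_consGe, zig_consLe, zig_single, LinearMap.comp_apply,
          LinearMap.id_coe, id_eq]
        rw [show M.map haP = M.map (hab.trans hwP) from rfl, hp_SC3 M hiso hab hwP]
      | consGe hvw q'' =>
        refine ⟨.consLe haP (.consGe (hvw.trans hwP) q''), by simp only [zlen_single, zlen_consLe, zlen_consGe]; omega, ?_⟩
        refine LinearMap.ext fun x => ?_
        simp only [zig_consGe, zig_consLe, LinearMap.comp_apply]
        rw [hp_invK]
      | consLe hwQ q'' =>
        rename_i Q
        -- tighten the valley w to m = P ⊓ Q
        have hcP : (w : ℝ × ℝ) ≤ (P : ℝ × ℝ) := Subtype.coe_le_coe.mpr hwP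
        have hcQ : (w : ℝ × ℝ) ≤ (Q : ℝ × ℝ) := Subtype.coe_le_coe.mpr hwQ
        have hmem : ((P : ℝ × ℝ) ⊓ (Q : ℝ × ℝ)) ∈ J :=
          hconv (w : ℝ × ℝ) w.2 (P : ℝ × ℝ) P.2 _ (le_inf hcP hcQ) inf_le_left
        set m : ↥J := ⟨(P : ℝ × ℝ) ⊓ (Q : ℝ × ℝ), hmem⟩ with hm
        have hwm : w ≤ m := Subtype.coe_le_coe.mp (le_inf hcP hcQ)
        have hmP : m ≤ P := Subtype.coe_le_coe.mp inf_le_left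
        have hmQ : m ≤ Q := Subtype.coe_le_coe.mp inf_le_right
        by_cases ham : a ≤ m
        · refine ⟨.consLe (ham.trans hmQ) q'', by simp only [zlen_single, zlen_consLe, zlen_consGe]; omega, ?_⟩
          refine LinearMap.ext fun x => ?_
          simp only [zig_consGe, zig_consLe, LinearMap.comp_apply]
          rw [show M.map hwQ = M.map (hwm.trans hmQ) from rfl,
            show (Minv M hiso hwP : M.V P →ₗ[F] M.V w) = Minv M hiso (hwm.trans hmP) from rfl,
            hp_VAL M hiso hwm hmP hmQ,
            show M.map haP = M.map (ham.trans hmP) from rfl,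
            hp_SC3 M hiso ham hmP, hp_K]
        · by_cases hma : m ≤ a
          · refine ⟨.consGe hma (.consLe hmQ q''), by simp only [zlen_single, zlen_consLe, zlen_consGe]; omega, ?_⟩
            refine LinearMap.ext fun x => ?_
            simp only [zig_consGe, zig_consLe, LinearMap.comp_apply]
            rw [show M.map hwQ = M.map (hwm.trans hmQ) from rfl,
              show (Minv M hiso hwP : M.V P →ₗ[F] M.V w) = Minv M hiso (hwm.trans hmP) from rfl,
              hp_VAL M hiso hwm hmP hmQ,
              show (Minv M hiso hmP : M.V P →ₗ[F] M.V m) = Minv M hiso (hma.trans haP) from rfl,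
              hp_SC4 M hiso hma haP]
          · -- a and m incomparable : launch the staircase walk
            have hna : ¬((a : ℝ × ℝ) ≤ (m : ℝ × ℝ)) := fun hc => ham (Subtype.coe_le_coe.mp hc)
            have hcaP : (a : ℝ × ℝ) ≤ (P : ℝ × ℝ) := Subtype.coe_le_coe.mpr haP
            have hcab : (a : ℝ × ℝ) ≤ (b : ℝ × ℝ) := Subtype.coe_le_coe.mpr hab
            rw [Prod.le_def, not_and_or] at hna
            push_neg at hna
            have key : ∃ s : Zigzag (↥J) P b, zlen s < 2 + zlen q'' ∧
                zigzagMap M hiso s = zigzagMap M hiso (.consGe hmP (.consLe hmQ q'')) := by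
              rcases hna with hx | hy
              · -- first coordinate : m.1 < a.1
                have hminx : (m : ℝ × ℝ).1 = min (P : ℝ × ℝ).1 (Q : ℝ × ℝ).1 := zz_hinfA _ _
                have hQP : (Q : ℝ × ℝ).1 ≤ (P : ℝ × ℝ).1 := by
                  by_contra hcon
                  push_neg at hcon
                  rw [hminx] at hx
                  have := min_eq_left hcon.le
                  rw [this] at hx
                  exact absurd hcaP.1 (not_le.mpr hx)
                have hmQ1 : (m : ℝ × ℝ).1 = (Q : ℝ × ℝ).1 := by
                  rw [hminx]; exact min_eq_right hQP
                have hQa1 : (Q : ℝ × ℝ).1 < (a : ℝ × ℝ).1 := hmQ1 ▸ hx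
                exact zz_core M hiso hconv Prod.fst Prod.snd zz_hleA zz_hinfA
                  ((a : ℝ × ℝ).1) hcab.1 (zlen q'') Q q'' le_rfl P m hmP hmQ hQa1 hmQ1
              · -- second coordinate : m.2 < a.2
                have hminx : (m : ℝ × ℝ).2 = min (P : ℝ × ℝ).2 (Q : ℝ × ℝ).2 := zz_hinfB _ _
                have hQP : (Q : ℝ × ℝ).2 ≤ (P : ℝ × ℝ).2 := by
                  by_contra hcon
                  push_neg at hcon
                  rw [hminx] at hy
                  have := min_eq_left hcon.le
                  rw [this] at hy
                  exact absurd hcaP.2 (not_le.mpr hy)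
                have hmQ1 : (m : ℝ × ℝ).2 = (Q : ℝ × ℝ).2 := by
                  rw [hminx]; exact min_eq_right hQP
                have hQa1 : (Q : ℝ × ℝ).2 < (a : ℝ × ℝ).2 := hmQ1 ▸ hy
                exact zz_core M hiso hconv Prod.snd Prod.fst zz_hleB zz_hinfB
                  ((a : ℝ × ℝ).2) hcab.2 (zlen q'') Q q'' le_rfl P m hmP hmQ hQa1 hmQ1
            obtain ⟨s, hslen, hszig⟩ := key
            refine ⟨.consLe haP s, by simp only [zlen_single, zlen_consLe, zlen_consGe]; omega, ?_⟩
            refine LinearMap.ext fun x => ?_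
            simp only [zig_consGe, zig_consLe, LinearMap.comp_apply]
            have := LinearMap.congr_fun hszig (M.map haP x)
            simp only [zig_consGe, zig_consLe, LinearMap.comp_apply] at this
            rw [this,
              show M.map hwQ = M.map (hwm.trans hmQ) from rfl,
              show (Minv M hiso hwP : M.V P →ₗ[F] M.V w) = Minv M hiso (hwm.trans hmP) from rfl,
              hp_VAL M hiso hwm hmP hmQ]
  | consGe hwa q =>
    rename_i w
    cases q with
    | single => simp [zlen] at h2
    | consGe hvw q' =>
      refine ⟨.consGe (hvw.trans hwa) q', by simp only [zlen_single, zlen_consLe, zlen_consGe]; omega, ?_⟩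
      refine LinearMap.ext fun x => ?_
      simp only [zig_consGe, zig_consLe, LinearMap.comp_apply]
      rw [hp_invK]
    | consLe hwQ q' =>
      rename_i Q
      by_cases haQ : a ≤ Q
      · refine ⟨.consLe haQ q', by simp only [zlen_single, zlen_consLe, zlen_consGe]; omega, ?_⟩
        refine LinearMap.ext fun x => ?_
        simp only [zig_consGe, zig_consLe, LinearMap.comp_apply]
        rw [show M.map hwQ = M.map (hwa.trans haQ) from rfl, hp_SC1 M hiso hwa haQ]
      · by_cases hQa : Q ≤ a
        · refine ⟨.consGe hQa q', by simp only [zlen_single, zlen_consLe, zlen_consGe]; omega, ?_⟩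
          refine LinearMap.ext fun x => ?_
          simp only [zig_consGe, zig_consLe, LinearMap.comp_apply]
          rw [show (Minv M hiso hwa : M.V a →ₗ[F] M.V w) = Minv M hiso (hwQ.trans hQa) from rfl,
            hp_SC2 M hiso hwQ hQa]
        · -- a and Q incomparable : tighten w to m = a ⊓ Q and launch the walk
          have hca : (w : ℝ × ℝ) ≤ (a : ℝ × ℝ) := Subtype.coe_le_coe.mpr hwa
          have hcQ : (w : ℝ × ℝ) ≤ (Q : ℝ × ℝ) := Subtype.coe_le_coe.mpr hwQ
          have hmem : ((a : ℝ × ℝ) ⊓ (Q : ℝ × ℝ)) ∈ J :=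
            hconv (w : ℝ × ℝ) w.2 (a : ℝ × ℝ) a.2 _ (le_inf hca hcQ) inf_le_left
          set m : ↥J := ⟨(a : ℝ × ℝ) ⊓ (Q : ℝ × ℝ), hmem⟩ with hm
          have hwm : w ≤ m := Subtype.coe_le_coe.mp (le_inf hca hcQ)
          have hma : m ≤ a := Subtype.coe_le_coe.mp inf_le_left
          have hmQ : m ≤ Q := Subtype.coe_le_coe.mp inf_le_right
          have hna : ¬((a : ℝ × ℝ) ≤ (Q : ℝ × ℝ)) := fun hc => haQ (Subtype.coe_le_coe.mp hc)
          have hcab : (a : ℝ × ℝ) ≤ (b : ℝ × ℝ) := Subtype.coe_le_coe.mpr hab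
          rw [Prod.le_def, not_and_or] at hna
          push_neg at hna
          have key : ∃ s : Zigzag (↥J) a b, zlen s < 2 + zlen q' ∧
              zigzagMap M hiso s = zigzagMap M hiso (.consGe hma (.consLe hmQ q')) := by
            rcases hna with hx | hy
            · have hmQ1 : (m : ℝ × ℝ).1 = (Q : ℝ × ℝ).1 := by
                rw [show (m : ℝ × ℝ).1 = min (a : ℝ × ℝ).1 (Q : ℝ × ℝ).1 from zz_hinfA _ _]
                exact min_eq_right hx.le
              exact zz_core M hiso hconv Prod.fst Prod.snd zz_hleA zz_hinfA
                ((a : ℝ × ℝ).1) hcab.1 (zlen q') Q q' le_rfl a m hma hmQ hx hmQ1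
            · have hmQ1 : (m : ℝ × ℝ).2 = (Q : ℝ × ℝ).2 := by
                rw [show (m : ℝ × ℝ).2 = min (a : ℝ × ℝ).2 (Q : ℝ × ℝ).2 from zz_hinfB _ _]
                exact min_eq_right hy.le
              exact zz_core M hiso hconv Prod.snd Prod.fst zz_hleB zz_hinfB
                ((a : ℝ × ℝ).2) hcab.2 (zlen q') Q q' le_rfl a m hma hmQ hy hmQ1
          obtain ⟨s, hslen, hszig⟩ := key
          refine ⟨s, by simp only [zlen_single, zlen_consLe, zlen_consGe]; omega, ?_⟩
          refine LinearMap.ext fun x => ?_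
          have := LinearMap.congr_fun hszig x
          simp only [zig_consGe, zig_consLe, LinearMap.comp_apply] at this ⊢
          rw [this,
            show M.map hwQ = M.map (hwm.trans hmQ) from rfl,
            show (Minv M hiso hwa : M.V a →ₗ[F] M.V w) = Minv M hiso (hwm.trans hma) from rfl,
            hp_VAL M hiso hwm hma hmQ]


/-- Main induction: by strong induction on the length of the zigzag. -/
theorem zz_main (hconv : PosetConvex J) :
    ∀ (n : ℕ) (a b : ↥J) (hab : a ≤ b) (p : Zigzag (↥J) a b), zlen p ≤ n →
      zigzagMap M hiso p = M.map hab := by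
  intro n
  induction n with
  | zero =>
    intro a b hab p hp
    cases p with
    | single =>
      rw [zig_single]
      exact (M.map_id a).symm
    | consLe h q => simp [zlen] at hp
    | consGe h q => simp [zlen] at hp
  | succ n ih =>
    intro a b hab p hp
    rcases Nat.lt_or_ge (zlen p) 2 with hsmall | hbig
    · -- length 0 or 1 : base cases
      cases p with
      | single =>
        rw [zig_single]
        exact (M.map_id a).symm
      | consLe h q =>
        cases q with
        | single =>
          refine LinearMap.ext fun x => ?_
          simp only [zig_consLe, zig_single, LinearMap.comp_apply, LinearMap.id_coe, id_eq]
        | consLe h' q' => simp only [zlen_consLe, zlen_consGe] at hsmall; omega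
        | consGe h' q' => simp only [zlen_consLe, zlen_consGe] at hsmall; omega
      | consGe h q =>
        cases q with
        | single =>
          -- h : b ≤ a and hab : a ≤ b
          refine LinearMap.ext fun x => ?_
          simp only [zig_consGe, zig_single, LinearMap.comp_apply, LinearMap.id_coe, id_eq]
          show (LinearEquiv.ofBijective (M.map h) (hiso b a h)).symm x = M.map hab x
          rw [LinearEquiv.symm_apply_eq, LinearEquiv.ofBijective_apply, hp_K M hab h]
          rw [show M.map (hab.trans h) = (LinearMap.id : M.V a →ₗ[F] M.V a) from M.map_id a]
          rfl
        | consLe h' q' => simp only [zlen_consLe, zlen_consGe] at hsmall; omega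
        | consGe h' q' => simp only [zlen_consLe, zlen_consGe] at hsmall; omega
    · obtain ⟨r, hrlen, hrzig⟩ := zz_reduce M hiso hconv hab p hbig
      rw [← hrzig]
      exact ih a b hab r (by omega)


end RealPart


/-- For `M` on a connected convex `J ⊆ (ℝ,≤)²` with all structure maps
isomorphisms, the composite along any zigzag path from `a` to `b` with `a ≤ b`
equals `M(a ≤ b)`. -/
theorem statement1 (F : Type) [Field F] (J : Set (ℝ × ℝ))
    (hconv : PosetConvex J) (hconn : ZigzagConnected J)
    (M : PersistenceModule F ↥J)
    (hiso : ∀ (i j : ↥J) (h : i ≤ j), Function.Bijective (M.map h))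
    (a b : ↥J) (hab : a ≤ b) (p : Zigzag (↥J) a b) :
    zigzagMap M hiso p = M.map hab := by
  exact zz_main M hiso hconv (ZZHelp.zlen p) a b hab p le_rfl
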